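/- Let Ω ⊂ ℝⁿ be a bounded Lipschitz domain with barycenter at the origin (∫_Ω x dx = 0), let u₀ ∈ H¹(Ω; ℝⁿ), let R₀ ∈ SO(n) minimize R ↦ ∫_Ω π(Rx) dx over SO(n), where π is C¹ on a neighborhood of the closure of ∪_{R∈SO(n)} RΩ. Define E₀(u, R₀) = (1/2)∫_Ω Q(x, e(u)(x)) dx + ∫_{∂Ω} π(R₀x) n_{∂Ω}(x) · u(x) dH^{n−1}(x), where Q(x,·) is any quadratic form and e(u) the symmetric gradient. Then for every skew-symmetric A, E₀(u₀ + Ax, R₀) = E₀(u₀, R₀). -/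

import Mathlib

open MeasureTheory

/-- The special orthogonal group `SO(n)` as a set of matrices. -/
def SOn (n : ℕ) : Set (Matrix (Fin n) (Fin n) ℝ) :=
  {R | R.transpose * R = 1 ∧ R.det = 1}

/-- The union `𝓞 = ⋃_{R ∈ SO(n)} R Ω` of all rotated copies of `Ω`. -/
def bigO (n : ℕ) (Ω : Set (Fin n → ℝ)) : Set (Fin n → ℝ) :=
  ⋃ R ∈ SOn n, (fun x => R.mulVec x) '' Ω

/-- The symmetric gradient `e(u) = (∇u + ∇uᵀ)/2` of a map `u : ℝⁿ → ℝⁿ`. -/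
noncomputable def symGrad {n : ℕ} (u : (Fin n → ℝ) → (Fin n → ℝ)) (x : Fin n → ℝ) :
    Matrix (Fin n) (Fin n) ℝ :=
  Matrix.of fun i j =>
    (fderiv ℝ u x (Pi.single j 1) i + fderiv ℝ u x (Pi.single i 1) j) / 2

open scoped Matrix
open NormedSpace (exp)

attribute [local instance] Matrix.linftyOpNormedRing Matrix.linftyOpNormedAlgebra

lemma SOn.mul_mem {n : ℕ} {R S : Matrix (Fin n) (Fin n) ℝ} (hR : R ∈ SOn n) (hS : S ∈ SOn n) :
    R * S ∈ SOn n := by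
  obtain ⟨hR1, hR2⟩ := hR; obtain ⟨hS1, hS2⟩ := hS
  constructor
  · rw [Matrix.transpose_mul, mul_assoc, ← mul_assoc Rᵀ, hR1, one_mul, hS1]
  · rw [Matrix.det_mul, hR2, hS2, mul_one]

lemma SOn.entry_le {n : ℕ} {R : Matrix (Fin n) (Fin n) ℝ} (hR : R ∈ SOn n) (i j : Fin n) :
    |R i j| ≤ 1 := by
  have h1 : (Rᵀ * R) j j = 1 := by rw [hR.1]; simp
  have hsum : ∑ k, R k j * R k j = 1 := by
    simpa [Matrix.mul_apply, Matrix.transpose_apply] using h1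
  have hle : R i j * R i j ≤ 1 := by
    rw [← hsum]
    exact Finset.single_le_sum (fun k _ => mul_self_nonneg (R k j)) (Finset.mem_univ i)
  nlinarith [abs_nonneg (R i j), abs_mul_abs_self (R i j)]

lemma SOn.mulVec_norm_le {n : ℕ} {R : Matrix (Fin n) (Fin n) ℝ} (hR : R ∈ SOn n)
    (x : Fin n → ℝ) : ‖R.mulVec x‖ ≤ n * ‖x‖ := by
  rw [pi_norm_le_iff_of_nonneg (by positivity)]
  intro i
  calc ‖R.mulVec x i‖ = |∑ j, R i j * x j| := by rfl
    _ ≤ ∑ j, |R i j * x j| := Finset.abs_sum_le_sum_abs _ _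
    _ ≤ ∑ j : Fin n, ‖x‖ := by
        refine Finset.sum_le_sum fun j _ => ?_
        rw [abs_mul]
        calc |R i j| * |x j| ≤ 1 * ‖x‖ :=
              mul_le_mul (SOn.entry_le hR i j) (norm_le_pi_norm x j) (abs_nonneg _) zero_le_one
          _ = ‖x‖ := one_mul _
    _ = n * ‖x‖ := by simp [Finset.sum_const, nsmul_eq_mul]

lemma exp_skew_mem_SOn {n : ℕ} {A : Matrix (Fin n) (Fin n) ℝ} (hA : Aᵀ = -A) (t : ℝ) :
    exp (t • A) ∈ SOn n := by
  have horth : ∀ s : ℝ, (exp (s • A))ᵀ * exp (s • A) = 1 := by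
    intro s
    rw [← Matrix.exp_transpose, Matrix.transpose_smul, hA, smul_neg,
      ← Matrix.exp_add_of_commute (-(s • A)) (s • A) (Commute.neg_left rfl),
      neg_add_cancel]
    simp
  refine ⟨horth t, ?_⟩
  have hcont : Continuous fun s : ℝ => (exp (s • A)).det :=
    Continuous.matrix_det (continuous_iff_continuousAt.2 fun s =>
      (hasDerivAt_exp_smul_const A s).continuousAt)
  have hsq : ∀ s : ℝ, (exp (s • A)).det ^ 2 = 1 := by
    intro s
    have h := congrArg Matrix.det (horth s)
    rwa [Matrix.det_mul, Matrix.det_transpose, ← sq, Matrix.det_one] at h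
  have h0 : (exp ((0:ℝ) • A)).det = 1 := by simp
  by_contra hne
  have ht : (exp (t • A)).det = -1 := by
    rcases sq_eq_one_iff.mp (hsq t) with h | h
    · exact absurd h hne
    · exact h
  have : (0:ℝ) ∈ Set.uIcc ((exp ((0:ℝ) • A)).det) ((exp (t • A)).det) := by
    rw [h0, ht, Set.uIcc_of_ge (by norm_num : (-1:ℝ) ≤ 1)]
    constructor <;> norm_num
  obtain ⟨s, _, hs⟩ := intermediate_value_uIcc (hcont.continuousOn) this
  have h2 := hsq s
  simp only at hs
  rw [hs] at h2
  norm_num at h2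

lemma clm_pi_apply {n : ℕ} (ℓ : (Fin n → ℝ) →L[ℝ] ℝ) (v : Fin n → ℝ) :
    ℓ v = ∑ i, v i * ℓ (Pi.single i 1) := by
  have hv : v = ∑ i, v i • (Pi.single i (1:ℝ) : Fin n → ℝ) := by
    refine funext fun j => ?_
    rw [Finset.sum_apply]
    simp [Pi.single_apply]
  conv_lhs => rw [hv]
  rw [map_sum]
  exact Finset.sum_congr rfl fun i _ => by rw [ContinuousLinearMap.map_smul, smul_eq_mul]

lemma symGrad_add_skew {n : ℕ} (u₀ : (Fin n → ℝ) → (Fin n → ℝ)) (hu₀ : Differentiable ℝ u₀)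
    {A : Matrix (Fin n) (Fin n) ℝ} (hA : Aᵀ = -A) (x : Fin n → ℝ) :
    symGrad (fun z => u₀ z + A.mulVec z) x = symGrad u₀ x := by
  have hL : HasFDerivAt (fun z : Fin n → ℝ => A.mulVec z)
      (LinearMap.toContinuousLinearMap A.mulVecLin) x :=
    (LinearMap.toContinuousLinearMap A.mulVecLin).hasFDerivAt
  have hd : fderiv ℝ (fun z => u₀ z + A.mulVec z) x
      = fderiv ℝ u₀ x + LinearMap.toContinuousLinearMap A.mulVecLin :=
    ((hu₀ x).hasFDerivAt.add hL).fderiv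
  have hent : ∀ i j : Fin n, (LinearMap.toContinuousLinearMap A.mulVecLin) (Pi.single j 1) i
      = A i j := by
    intro i j
    show A.mulVec (Pi.single j 1) i = A i j
    rw [Matrix.mulVec_single]
    exact mul_one _
  have hskew : ∀ i j : Fin n, A j i = -A i j := fun i j => by
    have h := congrFun (congrFun hA i) j
    simpa [Matrix.transpose_apply] using h
  unfold symGrad
  refine congrArg Matrix.of (funext fun i => funext fun j => ?_)
  rw [hd]
  simp only [ContinuousLinearMap.add_apply, Pi.add_apply, hent]
  rw [hskew i j]
  ring

theorem stmt_13 (n : ℕ) (Ω : Set (Fin n → ℝ)) (hΩo : IsOpen Ω)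
    (hΩb : Bornology.IsBounded Ω)
    (hbary : (∫ x in Ω, x : Fin n → ℝ) = 0)
    (σ : Measure (Fin n → ℝ)) (ν : (Fin n → ℝ) → (Fin n → ℝ))
    -- `σ` is the surface measure on `∂Ω` and `ν` the outward unit normal, encoded
    -- through the Gauss–Green (divergence) theorem for `C¹` vector fields:
    (hGG : ∀ (V : Set (Fin n → ℝ)) (f : (Fin n → ℝ) → (Fin n → ℝ)),
      IsOpen V → closure Ω ⊆ V → ContDiffOn ℝ 1 f V →
      (∫ x in Ω, ∑ i, fderiv ℝ f x (Pi.single i 1) i) =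
        ∫ x in frontier Ω, (∑ i, ν x i * f x i) ∂σ)
    (π : (Fin n → ℝ) → ℝ) (U : Set (Fin n → ℝ)) (hU : IsOpen U)
    (hOU : closure (bigO n Ω) ⊆ U) (hπ : ContDiffOn ℝ 1 π U)
    (R₀ : Matrix (Fin n) (Fin n) ℝ) (hR₀ : R₀ ∈ SOn n)
    (hmin : ∀ S ∈ SOn n, (∫ x in Ω, π (R₀.mulVec x)) ≤ ∫ x in Ω, π (S.mulVec x))
    (Q : (Fin n → ℝ) → Matrix (Fin n) (Fin n) ℝ → ℝ)
    (u₀ : (Fin n → ℝ) → (Fin n → ℝ)) (hu₀ : Differentiable ℝ u₀) :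
    ∀ A : Matrix (Fin n) (Fin n) ℝ, A.transpose = -A →
      ((1 : ℝ) / 2) * (∫ x in Ω, Q x (symGrad (fun z => u₀ z + A.mulVec z) x)) +
        (∫ x in frontier Ω,
          π (R₀.mulVec x) * (∑ i, ν x i * (u₀ x + A.mulVec x) i) ∂σ) =
      ((1 : ℝ) / 2) * (∫ x in Ω, Q x (symGrad u₀ x)) +
        (∫ x in frontier Ω, π (R₀.mulVec x) * (∑ i, ν x i * u₀ x i) ∂σ) := by
  intro A hA
  have hsg := symGrad_add_skew u₀ hu₀ hA
  simp only [hsg]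
  congr 1
  -- boundary term equality
  rcases Nat.eq_zero_or_pos n with hn | hn
  · subst hn
    have : ∀ x : Fin 0 → ℝ, (∑ i, ν x i * (u₀ x + A.mulVec x) i) = ∑ i, ν x i * u₀ x i := by
      intro x; simp
    simp only [this]
  rcases Set.eq_empty_or_nonempty Ω with hΩe | hne
  · rw [hΩe, frontier_empty, Measure.restrict_empty, integral_zero_measure,
      integral_zero_measure]
  -- main case
  -- Basic geometric facts
  have h1mem : (1 : Matrix (Fin n) (Fin n) ℝ) ∈ SOn n := ⟨by simp, by simp⟩
  have hΩsub : Ω ⊆ bigO n Ω := fun x hx =>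
    Set.mem_iUnion₂.2 ⟨1, h1mem, ⟨x, hx, by simp [Matrix.one_mulVec]⟩⟩
  have hclΩU : closure Ω ⊆ U := fun x hx => hOU (closure_mono hΩsub hx)
  have hbigO_mem : ∀ S ∈ SOn n, ∀ x ∈ Ω, S.mulVec x ∈ bigO n Ω := fun S hS x hx =>
    Set.mem_iUnion₂.2 ⟨S, hS, ⟨x, hx, rfl⟩⟩
  -- boundedness and compactness
  obtain ⟨r, hr⟩ := hΩb.subset_closedBall 0
  have hbigOb : Bornology.IsBounded (bigO n Ω) := by
    rw [Metric.isBounded_iff_subset_closedBall 0]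
    refine ⟨n * r, fun y hy => ?_⟩
    obtain ⟨S, hS, x, hx, rfl⟩ := Set.mem_iUnion₂.1 hy
    rw [Metric.mem_closedBall, dist_zero_right]
    calc ‖S.mulVec x‖ ≤ n * ‖x‖ := SOn.mulVec_norm_le hS x
      _ ≤ n * r := by
          have hxr : ‖x‖ ≤ r := by
            have := hr hx; rwa [Metric.mem_closedBall, dist_zero_right] at this
          exact mul_le_mul_of_nonneg_left hxr (by positivity)
  have hK : IsCompact (closure (bigO n Ω)) :=
    Metric.isCompact_of_isClosed_isBounded isClosed_closure hbigOb.closure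
  have hclΩc : IsCompact (closure Ω) :=
    Metric.isCompact_of_isClosed_isBounded isClosed_closure hΩb.closure
  -- continuity of fderiv π
  have hfd_cont : ContinuousOn (fderiv ℝ π) U := hπ.continuousOn_fderiv_of_isOpen hU le_rfl
  obtain ⟨Cπ, hCπ⟩ := hK.exists_bound_of_continuousOn (hfd_cont.mono hOU)
  have hmvc : Continuous fun x : Fin n → ℝ => A.mulVec x :=
    (LinearMap.toContinuousLinearMap A.mulVecLin).continuous
  obtain ⟨CA, hCA⟩ := hclΩc.exists_bound_of_continuousOn hmvc.continuousOn
  have hR₀c : Continuous fun x : Fin n → ℝ => R₀.mulVec x :=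
    (LinearMap.toContinuousLinearMap R₀.mulVecLin).continuous
  have hR₀cl : ∀ x ∈ closure Ω, R₀.mulVec x ∈ U := by
    intro x hx
    refine hOU ?_
    have himg : (fun z => R₀.mulVec z) '' closure Ω ⊆ closure ((fun z => R₀.mulVec z) '' Ω) :=
      image_closure_subset_closure_image hR₀c
    refine closure_mono ?_ (himg ⟨x, hx, rfl⟩)
    exact fun y ⟨z, hz, hzy⟩ => hzy ▸ hbigO_mem R₀ hR₀ z hz
  -- the rotation path
  set S : ℝ → Matrix (Fin n) (Fin n) ℝ := fun t => R₀ * exp (t • A) with hSdef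
  have hSmem : ∀ t, S t ∈ SOn n := fun t => SOn.mul_mem hR₀ (exp_skew_mem_SOn hA t)
  have hS0 : S 0 = R₀ := by simp [hSdef]
  have hSU : ∀ (t : ℝ), ∀ x ∈ Ω, (S t).mulVec x ∈ U := fun t x hx =>
    hOU (subset_closure (hbigO_mem _ (hSmem t) x hx))
  -- EL equation via differentiation under the integral
  have hEL : (∫ x in Ω, fderiv ℝ π (R₀.mulVec x) (R₀.mulVec (A.mulVec x))) = 0 := by
    set F : ℝ → (Fin n → ℝ) → ℝ := fun t x => π ((S t).mulVec x) with hF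
    set F' : ℝ → (Fin n → ℝ) → ℝ :=
      fun t x => fderiv ℝ π ((S t).mulVec x) ((S t).mulVec (A.mulVec x)) with hF'
    have hScont : ∀ t, Continuous fun x : Fin n → ℝ => (S t).mulVec x := fun t =>
      (LinearMap.toContinuousLinearMap (S t).mulVecLin).continuous
    have hFmeas : ∀ t : ℝ, AEStronglyMeasurable (F t) (volume.restrict Ω) := by
      intro t
      refine ContinuousOn.aestronglyMeasurable ?_ hΩo.measurableSet
      exact hπ.continuousOn.comp (hScont t).continuousOn fun x hx => hSU t x hx
    have hFint : Integrable (F 0) (volume.restrict Ω) := by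
      refine (ContinuousOn.integrableOn_compact hclΩc ?_).mono_set subset_closure
      refine hπ.continuousOn.comp (hScont 0).continuousOn fun x hx => ?_
      rw [hS0]; exact hR₀cl x hx
    have hF'meas : AEStronglyMeasurable (F' 0) (volume.restrict Ω) := by
      refine ContinuousOn.aestronglyMeasurable ?_ hΩo.measurableSet
      refine ContinuousOn.clm_apply ?_ ((hScont 0).comp hmvc).continuousOn
      exact hfd_cont.comp (hScont 0).continuousOn fun x hx => hSU 0 x hx
    have hbound : ∀ x ∈ Ω, ∀ t ∈ Metric.ball (0:ℝ) 1, ‖F' t x‖ ≤ |Cπ| * (n * |CA|) := by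
      intro x hx t _
      have hy : (S t).mulVec x ∈ closure (bigO n Ω) :=
        subset_closure (hbigO_mem _ (hSmem t) x hx)
      calc ‖F' t x‖ ≤ ‖fderiv ℝ π ((S t).mulVec x)‖ * ‖(S t).mulVec (A.mulVec x)‖ :=
            ContinuousLinearMap.le_opNorm _ _
        _ ≤ |Cπ| * (n * |CA|) := by
            refine mul_le_mul ((hCπ _ hy).trans (le_abs_self _)) ?_ (norm_nonneg _)
              (abs_nonneg _)
            calc ‖(S t).mulVec (A.mulVec x)‖ ≤ n * ‖A.mulVec x‖ :=
                  SOn.mulVec_norm_le (hSmem t) _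
              _ ≤ n * |CA| := by
                  refine mul_le_mul_of_nonneg_left ?_ (by positivity)
                  exact (hCA x (subset_closure hx)).trans (le_abs_self _)
    have hdiff : ∀ x ∈ Ω, ∀ t ∈ Metric.ball (0:ℝ) 1,
        HasDerivAt (fun s => F s x) (F' t x) t := by
      intro x hx t _
      let lin : Matrix (Fin n) (Fin n) ℝ →ₗ[ℝ] (Fin n → ℝ) :=
        { toFun := fun M => (R₀ * M).mulVec x
          map_add' := fun M N => by simp [mul_add, Matrix.add_mulVec]
          map_smul' := fun (c : ℝ) M => by
            simp [Matrix.mul_smul, Matrix.smul_mulVec] }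
      have hlin : HasFDerivAt (fun M : Matrix (Fin n) (Fin n) ℝ => (R₀ * M).mulVec x)
          (LinearMap.toContinuousLinearMap lin) (exp (t • A)) :=
        (LinearMap.toContinuousLinearMap lin).hasFDerivAt
      have hexp := hasDerivAt_exp_smul_const (𝕂 := ℝ) A t
      have hc : HasDerivAt (fun s : ℝ => (R₀ * exp (s • A)).mulVec x)
          ((R₀ * (exp (t • A) * A)).mulVec x) t := by have := hlin.comp_hasDerivAt t hexp; exact this
      have hπd : HasFDerivAt π (fderiv ℝ π ((S t).mulVec x)) ((S t).mulVec x) :=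
        ((hπ.contDiffAt (hU.mem_nhds (hSU t x hx))).differentiableAt one_ne_zero).hasFDerivAt
      have := hπd.comp_hasDerivAt t hc
      have heq : (R₀ * (exp (t • A) * A)).mulVec x = (S t).mulVec (A.mulVec x) := by
        rw [Matrix.mulVec_mulVec, hSdef, mul_assoc]
      rw [heq] at this
      exact this
    have key := hasDerivAt_integral_of_dominated_loc_of_deriv_le (μ := volume.restrict Ω)
      (F := F) (F' := F') (x₀ := (0:ℝ)) (bound := fun _ => |Cπ| * (n * |CA|))
      (Metric.ball_mem_nhds 0 zero_lt_one) (Filter.Eventually.of_forall hFmeas) hFint hF'meas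
      ((ae_restrict_iff' hΩo.measurableSet).2 (Filter.Eventually.of_forall fun x hx =>
        fun t ht => hbound x hx t ht))
      (integrableOn_const hΩb.measure_lt_top.ne)
      ((ae_restrict_iff' hΩo.measurableSet).2 (Filter.Eventually.of_forall fun x hx =>
        fun t ht => hdiff x hx t ht))
    obtain ⟨-, hDer⟩ := key
    have hlocmin : IsLocalMin (fun t => ∫ x in Ω, F t x) 0 := by
      refine Filter.Eventually.of_forall fun t => ?_
      show (∫ x in Ω, F 0 x) ≤ ∫ x in Ω, F t x
      have h0 : (∫ x in Ω, F 0 x) = ∫ x in Ω, π (R₀.mulVec x) := by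
        simp only [hF, hS0]
      rw [h0]
      exact hmin (S t) (hSmem t)
    have hzero := hlocmin.hasDerivAt_eq_zero hDer
    have : (∫ x in Ω, F' 0 x) = ∫ x in Ω, fderiv ℝ π (R₀.mulVec x) (R₀.mulVec (A.mulVec x)) := by
      simp only [hF', hS0]
    rw [← this, hzero]
  -- the vector field f₀ and its divergence
  set V : Set (Fin n → ℝ) := U ∩ (fun x => R₀.mulVec x) ⁻¹' U with hVdef
  have hVo : IsOpen V := hU.inter (hU.preimage hR₀c)
  have hclV : closure Ω ⊆ V := fun x hx => ⟨hclΩU hx, hR₀cl x hx⟩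
  set f₀ : (Fin n → ℝ) → (Fin n → ℝ) := fun x => π (R₀.mulVec x) • A.mulVec x with hf₀def
  set LA := LinearMap.toContinuousLinearMap A.mulVecLin with hLAdef
  set LR := LinearMap.toContinuousLinearMap R₀.mulVecLin with hLRdef
  have hf₀V : ContDiffOn ℝ 1 f₀ V := by
    refine ContDiffOn.smul (f := fun x => π (R₀.mulVec x)) (g := LA) ?_ (LA.contDiff.contDiffOn)
    exact hπ.comp LR.contDiff.contDiffOn fun x hx => hx.2
  -- derivative of f₀ at points of V
  have hDf : ∀ x ∈ V, HasFDerivAt f₀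
      (π (R₀.mulVec x) • LA +
        ((fderiv ℝ π (R₀.mulVec x)).comp LR).smulRight (A.mulVec x)) x := by
    intro x hx
    have hπd : HasFDerivAt π (fderiv ℝ π (R₀.mulVec x)) (R₀.mulVec x) :=
      ((hπ.contDiffAt (hU.mem_nhds hx.2)).differentiableAt one_ne_zero).hasFDerivAt
    have hcomp : HasFDerivAt (fun y => π (R₀.mulVec y))
        ((fderiv ℝ π (R₀.mulVec x)).comp LR) x := hπd.comp x LR.hasFDerivAt
    exact hcomp.smul LA.hasFDerivAt
  have htr : ∀ i : Fin n, A i i = 0 := by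
    intro i
    have h := congrFun (congrFun hA i) i
    simp only [Matrix.transpose_apply, Matrix.neg_apply] at h
    linarith
  have hdivf₀ : ∀ x ∈ V, (∑ i, fderiv ℝ f₀ x (Pi.single i 1) i)
      = fderiv ℝ π (R₀.mulVec x) (R₀.mulVec (A.mulVec x)) := by
    intro x hx
    rw [(hDf x hx).fderiv]
    have hterm : ∀ i : Fin n,
        (π (R₀.mulVec x) • LA +
          ((fderiv ℝ π (R₀.mulVec x)).comp LR).smulRight (A.mulVec x)) (Pi.single i 1) i
        = π (R₀.mulVec x) * A i i
          + (A.mulVec x) i * ((fderiv ℝ π (R₀.mulVec x)).comp LR) (Pi.single i 1) := by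
      intro i
      have h1 : (LA (Pi.single i 1)) i = A i i := by
        show (A.mulVec (Pi.single i 1)) i = A i i
        rw [Matrix.mulVec_single]
        exact mul_one _
      simp only [ContinuousLinearMap.add_apply, Pi.add_apply,
        ContinuousLinearMap.coe_smul', Pi.smul_apply, smul_eq_mul,
        ContinuousLinearMap.smulRight_apply]
      rw [h1]
      ring
    rw [Finset.sum_congr rfl fun i _ => hterm i, Finset.sum_add_distrib]
    have hz : (∑ i, π (R₀.mulVec x) * A i i) = 0 := by
      simp [htr]
    rw [hz, zero_add, ← clm_pi_apply ((fderiv ℝ π (R₀.mulVec x)).comp LR) (A.mulVec x)]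
    rfl
  -- integrability of the divergence over Ω
  have hgdiv_cont : ContinuousOn
      (fun x => fderiv ℝ π (R₀.mulVec x) (R₀.mulVec (A.mulVec x))) (closure Ω) := by
    refine ContinuousOn.clm_apply ?_ ((hR₀c.comp hmvc).continuousOn)
    exact hfd_cont.comp hR₀c.continuousOn fun x hx => hR₀cl x hx
  have hgdiv_int : IntegrableOn
      (fun x => fderiv ℝ π (R₀.mulVec x) (R₀.mulVec (A.mulVec x))) Ω volume :=
    (hgdiv_cont.integrableOn_compact hclΩc).mono_set subset_closure
  -- the two Gauss-Green identities
  have hvolpos : (0:ℝ) < (volume Ω).toReal * n := by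
    have h1 : 0 < (volume Ω).toReal :=
      ENNReal.toReal_pos (hΩo.measure_pos volume hne).ne' hΩb.measure_lt_top.ne
    have h2 : (0:ℝ) < n := by exact_mod_cast hn
    positivity
  have hgg1 := hGG V (fun x => x) hVo hclV contDiffOn_id
  have hgg1L : (∫ x in Ω, ∑ i, fderiv ℝ (fun x : Fin n → ℝ => x) x (Pi.single i 1) i)
      = (volume Ω).toReal * n := by
    have : ∀ x : Fin n → ℝ, (∑ i, fderiv ℝ (fun x : Fin n → ℝ => x) x (Pi.single i 1) i)
        = (n : ℝ) := by
      intro x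
      rw [fderiv_id']
      simp
    simp only [this]
    rw [setIntegral_const]
    simp [mul_comm, measureReal_def]
  have hgg2 := hGG V (fun x => f₀ x + x) hVo hclV (hf₀V.add contDiffOn_id)
  have hgg2L : (∫ x in Ω, ∑ i, fderiv ℝ (fun x => f₀ x + x) x (Pi.single i 1) i)
      = (volume Ω).toReal * n := by
    have heq : ∀ x ∈ Ω, (∑ i, fderiv ℝ (fun x => f₀ x + x) x (Pi.single i 1) i)
        = fderiv ℝ π (R₀.mulVec x) (R₀.mulVec (A.mulVec x)) + n := by
      intro x hx
      have hxV : x ∈ V := hclV (subset_closure hx)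
      have hsum : HasFDerivAt (fun y => f₀ y + y)
          ((π (R₀.mulVec x) • LA +
            ((fderiv ℝ π (R₀.mulVec x)).comp LR).smulRight (A.mulVec x))
            + ContinuousLinearMap.id ℝ (Fin n → ℝ)) x :=
        (hDf x hxV).add (hasFDerivAt_id x)
      rw [hsum.fderiv]
      simp only [ContinuousLinearMap.add_apply, Pi.add_apply,
        ContinuousLinearMap.coe_id', id_eq]
      rw [Finset.sum_add_distrib]
      have h2 : (∑ i : Fin n, (Pi.single i 1 : Fin n → ℝ) i) = (n:ℝ) := by simp
      rw [h2]
      congr 1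
      have := hdivf₀ x hxV
      rw [(hDf x hxV).fderiv] at this
      exact this
    rw [setIntegral_congr_fun hΩo.measurableSet heq, integral_add hgdiv_int
      (integrableOn_const hΩb.measure_lt_top.ne), hEL, zero_add,
      setIntegral_const]
    simp [mul_comm, measureReal_def]
  -- integrability on the boundary
  have I₁ : Integrable (fun x => ∑ i, ν x i * x i) (σ.restrict (frontier Ω)) := by
    by_contra hni
    rw [hgg1L, integral_undef hni] at hgg1
    exact hvolpos.ne' hgg1
  have I₂ : Integrable (fun x => ∑ i, ν x i * (f₀ x + x) i) (σ.restrict (frontier Ω)) := by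
    by_contra hni
    rw [hgg2L, integral_undef hni] at hgg2
    exact hvolpos.ne' hgg2
  have hsub : ∀ x, (∑ i, ν x i * (f₀ x + x) i) - (∑ i, ν x i * x i)
      = ∑ i, ν x i * f₀ x i := by
    intro x
    rw [← Finset.sum_sub_distrib]
    refine Finset.sum_congr rfl fun i _ => ?_
    simp only [Pi.add_apply]
    ring
  have I₃ : Integrable (fun x => ∑ i, ν x i * f₀ x i) (σ.restrict (frontier Ω)) :=
    (I₂.sub I₁).congr (Filter.Eventually.of_forall hsub)
  have hI₃val : (∫ x in frontier Ω, ∑ i, ν x i * f₀ x i ∂σ) = 0 := by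
    have : (∫ x in frontier Ω, ((∑ i, ν x i * (f₀ x + x) i) - ∑ i, ν x i * x i) ∂σ)
        = ∫ x in frontier Ω, ∑ i, ν x i * f₀ x i ∂σ :=
      integral_congr_ae (Filter.Eventually.of_forall hsub)
    rw [← this, integral_sub I₂ I₁, ← hgg2, ← hgg1, hgg1L, hgg2L, sub_self]
  -- final assembly
  have hptw : ∀ x, π (R₀.mulVec x) * (∑ i, ν x i * (u₀ x + A.mulVec x) i)
      = (π (R₀.mulVec x) * ∑ i, ν x i * u₀ x i) + ∑ i, ν x i * f₀ x i := by
    intro x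
    simp only [hf₀def, Pi.smul_apply, smul_eq_mul, Pi.add_apply, Finset.mul_sum,
      ← Finset.sum_add_distrib]
    refine Finset.sum_congr rfl fun i _ => ?_
    ring
  simp only [hptw]
  by_cases hb : Integrable (fun x => π (R₀.mulVec x) * ∑ i, ν x i * u₀ x i)
      (σ.restrict (frontier Ω))
  · rw [integral_add hb I₃, hI₃val, add_zero]
  · have hnadd : ¬ Integrable
        (fun x => π (R₀.mulVec x) * (∑ i, ν x i * u₀ x i) + ∑ i, ν x i * f₀ x i)
        (σ.restrict (frontier Ω)) := by
      intro hint
      exact hb ((hint.sub I₃).congr (Filter.Eventually.of_forall fun x => by simp))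
    rw [integral_undef hb, integral_undef hnadd]
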